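/- Every set-indexed process X with independent increments is set-Markov. -/

import Mathlib

open MeasureTheory ProbabilityTheory Set
open scoped ENNReal

noncomputable section

namespace SetIndexedMarkov

variable {T : Type*} [TopologicalSpace T] {Ω : Type*} [mΩ : MeasurableSpace Ω]

/-- `𝒜(u)`: the collection of all finite unions of sets in `𝒜`. -/
def Au (𝒜 : Set (Set T)) : Set (Set T) :=
  {B | ∃ s : Finset (Set T), ↑s ⊆ 𝒜 ∧ s.Nonempty ∧ B = ⋃₀ ↑s}

/-- `𝒞`: the collection of all sets of the form `A \ B` with `A ∈ 𝒜`, `B ∈ 𝒜(u)`. -/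
def CC (𝒜 : Set (Set T)) : Set (Set T) :=
  {C | ∃ A ∈ 𝒜, ∃ B ∈ Au 𝒜, C = A \ B}

/-- `∅' := ⋂ {A ∈ 𝒜 : A ≠ ∅}`, the minimal set of `𝒜`. -/
def emptyPrime (𝒜 : Set (Set T)) : Set T := ⋂₀ {A ∈ 𝒜 | A ≠ ∅}

/-- The standing structural assumptions on the indexing collection `𝒜`: a semilattice of
closed subsets of the compact Hausdorff space `T`, containing `∅` and `T`, closed under
arbitrary (nonempty) intersections, and containing no two disjoint nonempty sets. -/
structure IsIndexing (𝒜 : Set (Set T)) : Prop where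
  closed : ∀ A ∈ 𝒜, IsClosed A
  empty_mem : ∅ ∈ 𝒜
  univ_mem : Set.univ ∈ 𝒜
  sInter_mem : ∀ S ⊆ 𝒜, S.Nonempty → ⋂₀ S ∈ 𝒜
  no_disjoint : ∀ A ∈ 𝒜, ∀ B ∈ 𝒜, A.Nonempty → B.Nonempty → (A ∩ B).Nonempty

/-- The σ-field generated by a real random variable. -/
def sigOf (f : Ω → ℝ) : MeasurableSpace Ω := MeasurableSpace.comap f inferInstance

/-- The minimal filtration `ℱ_B = σ(X_A : A ∈ 𝒜, A ⊆ B)`. -/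
def filt (𝒜 : Set (Set T)) (X : Set T → Ω → ℝ) (B : Set T) : MeasurableSpace Ω :=
  ⨆ A ∈ {A | A ∈ 𝒜 ∧ A ⊆ B}, sigOf (X A)

/-- `G` and `H` are conditionally independent given `K` (under `P`):
`E[1_G 1_H | K] = E[1_G | K] ⬝ E[1_H | K]` a.s. for all `G`-, `H`-measurable sets. -/
def CondIndepGiven (P : Measure Ω) (G H K : MeasurableSpace Ω) : Prop :=
  ∀ g h : Set Ω, MeasurableSet[G] g → MeasurableSet[H] h →
    (P[((g ∩ h).indicator fun _ => (1 : ℝ)) | K]) =ᵐ[P]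
      fun ω => (P[(g.indicator fun _ => (1 : ℝ)) | K]) ω *
        (P[(h.indicator fun _ => (1 : ℝ)) | K]) ω

/-- Every `X_B`, `B ∈ 𝒜(u)`, is a (measurable) random variable. -/
def MeasOnAu (𝒜 : Set (Set T)) (X : Set T → Ω → ℝ) : Prop :=
  ∀ B ∈ Au 𝒜, Measurable (X B)

/-- The process `X` (viewed on `𝒜(u)`) is almost surely finitely additive, i.e. it is the
(a.s. unique) additive extension of its restriction to `𝒜`: it vanishes a.s. at `∅` and is
a.s. modular on the lattice `𝒜(u)`. -/
def AddExtension (𝒜 : Set (Set T)) (P : Measure Ω) (X : Set T → Ω → ℝ) : Prop :=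
  (∀ᵐ ω ∂P, X ∅ ω = 0) ∧
    ∀ B ∈ Au 𝒜, ∀ B' ∈ Au 𝒜,
      ∀ᵐ ω ∂P, X (B ∪ B') ω + X (B ∩ B') ω = X B ω + X B' ω

/-- `X` is set-Markov: for all `A ∈ 𝒜`, `B ∈ 𝒜(u)`, `ℱ_B ⟂ σ(X_{A∖B}) | σ(X_B)`,
where `X_{A∖B} = X_{A∪B} - X_B`. -/
def SetMarkov (𝒜 : Set (Set T)) (P : Measure Ω) (X : Set T → Ω → ℝ) : Prop :=
  ∀ A ∈ 𝒜, ∀ B ∈ Au 𝒜,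
    CondIndepGiven P (filt 𝒜 X B) (sigOf fun ω => X (A ∪ B) ω - X B ω) (sigOf (X B))

/-- A flow: an increasing map `f : [0,a] → 𝒜(u)`. -/
def IsFlow (𝒜 : Set (Set T)) (a : ℝ) (f : ℝ → Set T) : Prop :=
  (∀ t ∈ Set.Icc (0 : ℝ) a, f t ∈ Au 𝒜) ∧
    ∀ s t : ℝ, 0 ≤ s → s ≤ t → t ≤ a → f s ⊆ f t

/-- A continuous flow. -/
def IsContinuousFlow (𝒜 : Set (Set T)) (a : ℝ) (f : ℝ → Set T) : Prop :=
  IsFlow 𝒜 a f ∧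
    (∀ t ∈ Set.Icc (0 : ℝ) a, ∀ u : ℕ → ℝ, (∀ n, u n ∈ Set.Icc t a) → Antitone u →
      Filter.Tendsto u Filter.atTop (nhds t) → f t = ⋂ n, f (u n)) ∧
    (∀ t ∈ Set.Icc (0 : ℝ) a, ∀ u : ℕ → ℝ, (∀ n, u n ∈ Set.Icc 0 t) → Monotone u →
      Filter.Tendsto u Filter.atTop (nhds t) → f t = closure (⋃ n, f (u n)))

/-- A simple flow: a continuous flow starting at `∅'` which is piecewise `𝒜`-valued. -/
def IsSimpleFlow (𝒜 : Set (Set T)) (a : ℝ) (f : ℝ → Set T) : Prop :=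
  IsContinuousFlow 𝒜 a f ∧ f 0 = emptyPrime 𝒜 ∧
    ∃ (n : ℕ) (t : ℕ → ℝ) (g : ℕ → ℝ → Set T),
      0 < n ∧ t 0 = 0 ∧ t n = a ∧ (∀ i < n, t i < t (i + 1)) ∧
      (∀ i < n, ∀ s ∈ Set.Icc (t i) (t (i + 1)), g (i + 1) s ∈ 𝒜) ∧
      (∀ i < n, ∀ s u : ℝ, t i ≤ s → s ≤ u → u ≤ t (i + 1) → g (i + 1) s ⊆ g (i + 1) u) ∧
      (∀ i < n, ∀ s ∈ Set.Icc (t i) (t (i + 1)),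
        f s = (⋃ j ∈ Finset.Icc 1 i, g j (t j)) ∪ g (i + 1) s)

/-- A finite sub-semilattice of `𝒜`: a finite nonempty subfamily closed under intersection. -/
def IsSubSemilattice (𝒜 : Set (Set T)) (L : Finset (Set T)) : Prop :=
  ↑L ⊆ 𝒜 ∧ L.Nonempty ∧ ∀ A ∈ L, ∀ B ∈ L, A ∩ B ∈ L

/-- A consistent ordering `{A₀ = ∅', A₁, …, Aₙ}` of the finite sub-semilattice `L`. -/
structure ConsistentOrdering (𝒜 : Set (Set T)) (L : Finset (Set T)) (n : ℕ)
    (A : ℕ → Set T) : Prop where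
  zero : A 0 = emptyPrime 𝒜
  first : A 1 = ⋂₀ ↑L
  mem : ∀ i, 1 ≤ i → i ≤ n → A i ∈ L
  inj : ∀ i j, 1 ≤ i → i ≤ n → 1 ≤ j → j ≤ n → A i = A j → i = j
  surj : ∀ B ∈ L, ∃ i, 1 ≤ i ∧ i ≤ n ∧ A i = B
  consistent : ∀ i, 1 ≤ i → i ≤ n → ∀ B ∈ L, B ⊆ A i → B ≠ A i → ∃ j < i, A j = B

/-- `⋃_{j=1}^{i} A_j`. -/
def Uu (A : ℕ → Set T) (i : ℕ) : Set T := ⋃ j ∈ Finset.Icc 1 i, A j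

/-- `⋃_{j=0}^{i} A_j`. -/
def U0 (A : ℕ → Set T) (i : ℕ) : Set T := ⋃ j ∈ Finset.range (i + 1), A j

/-- The left neighbourhood `C_j = A_j ∖ ⋃_{l=0}^{j-1} A_l`. -/
def leftNbhd (A : ℕ → Set T) (j : ℕ) : Set T := A j \ ⋃ l ∈ Finset.range j, A l

/-- A (set-indexed) transition system `𝒬 = (Q_{BB'})_{B ⊆ B'}`. -/
def IsTransitionSystem (𝒜 : Set (Set T)) (Q : Set T → Set T → Kernel ℝ ℝ) : Prop :=
  (∀ B ∈ Au 𝒜, ∀ B' ∈ Au 𝒜, B ⊆ B' → IsMarkovKernel (Q B B')) ∧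
    (∀ B ∈ Au 𝒜, ∀ x : ℝ, Q B B x = Measure.dirac x) ∧
    (∀ B ∈ Au 𝒜, ∀ B' ∈ Au 𝒜, ∀ B'' ∈ Au 𝒜, B ⊆ B' → B' ⊆ B'' →
      ∀ (x : ℝ) (Γ : Set ℝ), MeasurableSet Γ →
        Q B B'' x Γ = ∫⁻ y, Q B' B'' y Γ ∂(Q B B' x))

/-- `X` is `𝒬`-Markov: `P[X_{B'} ∈ Γ | ℱ_B] = Q_{BB'}(X_B; Γ)` a.s. -/
def QMarkov (𝒜 : Set (Set T)) (P : Measure Ω) (X : Set T → Ω → ℝ)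
    (Q : Set T → Set T → Kernel ℝ ℝ) : Prop :=
  ∀ B ∈ Au 𝒜, ∀ B' ∈ Au 𝒜, B ⊆ B' → ∀ Γ : Set ℝ, MeasurableSet Γ →
    (P[fun ω => Γ.indicator (fun _ => (1 : ℝ)) (X B' ω) | filt 𝒜 X B]) =ᵐ[P]
      fun ω => (Q B B' (X B ω) Γ).toReal

/-- Iterated integration of the coordinates `i+1, …, i+m` of a path, each coordinate `j+1`
being integrated with respect to the kernel `κ j` applied at the coordinate `j`. -/
def stepInt (κ : ℕ → Kernel ℝ ℝ) : ℕ → ℕ → ((ℕ → ℝ) → ℝ≥0∞) → (ℕ → ℝ) → ℝ≥0∞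
  | _, 0, f, x => f x
  | i, m + 1, f, x =>
      ∫⁻ y, stepInt κ (i + 1) m f (Function.update x (i + 1) y) ∂(κ i (x i))

/-- The iterated integral
`∫ … ∫ f(x₀,…,xₙ) κ_{n-1}(x_{n-1}; dxₙ) ⋯ κ_0(x₀; dx₁) μ(dx₀)`. -/
def kiter (μ : Measure ℝ) (κ : ℕ → Kernel ℝ ℝ) (n : ℕ) (f : (ℕ → ℝ) → ℝ≥0∞) : ℝ≥0∞ :=
  ∫⁻ x₀, stepInt κ 0 n f (fun _ => x₀) ∂μ

/-- The sequence of kernels `Q_{∅'A₁}, Q_{A₁, A₁∪A₂}, …, Q_{⋃_{j<n}A_j, ⋃_{j≤n}A_j}`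
attached to a consistent ordering `A` by a set-indexed transition system `Q`. -/
def kerSeq (Q : Set T → Set T → Kernel ℝ ℝ) (A : ℕ → Set T) (i : ℕ) : Kernel ℝ ℝ :=
  Q (if i = 0 then A 0 else Uu A i) (Uu A (i + 1))

/-- The integrand `1_{Γ₀}(y₀) 1_{Γ₁}(y₁) ∏_{i=2}^{n} 1_{Γ_i}(y_{π(i)} - y_{π(i)-1})`. -/
def PermIntegrand (Γ : ℕ → Set ℝ) (π : ℕ → ℕ) (n : ℕ) (y : ℕ → ℝ) : ℝ≥0∞ :=
  (Γ 0).indicator 1 (y 0) * (Γ 1).indicator 1 (y 1) *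
    ∏ i ∈ Finset.Icc 2 n, (Γ i).indicator 1 (y (π i) - y (π i - 1))

/-- Assumption 1: the finite dimensional distributions built from `𝒬` over the left
neighbourhoods of a finite sub-semilattice do not depend on the consistent ordering. -/
def Assumption1 (𝒜 : Set (Set T)) (Q : Set T → Set T → Kernel ℝ ℝ) (μ : Measure ℝ) : Prop :=
  ∀ (L : Finset (Set T)) (n : ℕ) (A A' : ℕ → Set T) (π : Equiv.Perm ℕ),
    IsSubSemilattice 𝒜 L → ConsistentOrdering 𝒜 L n A → ConsistentOrdering 𝒜 L n A' →
    π 1 = 1 → (∀ i, ¬(1 ≤ i ∧ i ≤ n) → π i = i) →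
    (∀ i, 1 ≤ i → i ≤ n → A i = A' (π i)) →
    ∀ Γ : ℕ → Set ℝ, (∀ i, MeasurableSet (Γ i)) →
      kiter μ (kerSeq Q A) n (PermIntegrand Γ id n) =
        kiter μ (kerSeq Q A') n (PermIntegrand Γ π n)

/-- `X` has independent increments. -/
def IndepIncrements (𝒜 : Set (Set T)) (P : Measure Ω) (X : Set T → Ω → ℝ) : Prop :=
  ∀ (n : ℕ) (A B : ℕ → Set T),
    (∀ i < n, A i ∈ 𝒜) → (∀ i < n, B i ∈ Au 𝒜) →
    (∀ i < n, ∀ j < n, i ≠ j → Disjoint (A i \ B i) (A j \ B j)) →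
    iIndepFun
      (fun i : Fin n => fun ω => X (A i ∪ B i) ω - X (B i) ω) P

/-- The trace `X^f` of `X` along the flow `f` is Markov with the one-dimensional
transition system `Qf`. -/
def QMarkovFlow (𝒜 : Set (Set T)) (P : Measure Ω) (X : Set T → Ω → ℝ)
    (a : ℝ) (f : ℝ → Set T) (Qf : ℝ → ℝ → Kernel ℝ ℝ) : Prop :=
  ∀ s t : ℝ, 0 ≤ s → s < t → t ≤ a → ∀ Γ : Set ℝ, MeasurableSet Γ →
    (P[fun ω => Γ.indicator (fun _ => (1 : ℝ)) (X (f t) ω) | filt 𝒜 X (f s)]) =ᵐ[P]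
      fun ω => (Qf s t (X (f s) ω) Γ).toReal

/-- A one-dimensional transition system on the time interval `[0,a]`. -/
def IsFlowTransition (a : ℝ) (Q : ℝ → ℝ → Kernel ℝ ℝ) : Prop :=
  (∀ s t : ℝ, 0 ≤ s → s < t → t ≤ a → IsMarkovKernel (Q s t)) ∧
    ∀ s t u : ℝ, 0 ≤ s → s < t → t < u → u ≤ a →
      ∀ (x : ℝ) (Γ : Set ℝ), MeasurableSet Γ →
        Q s u x Γ = ∫⁻ y, Q t u y Γ ∂(Q s t x)

/-- The simple flow `f` connects the sets of a finite sub-semilattice in the sense of the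
consistent ordering `A`, with partition `t` of `[0,a]`. -/
def Connects (𝒜 : Set (Set T)) (n : ℕ) (A : ℕ → Set T) (a : ℝ) (t : ℕ → ℝ)
    (f : ℝ → Set T) : Prop :=
  t 0 = 0 ∧ t n = a ∧ (∀ i < n, t i < t (i + 1)) ∧
    (∀ i ≤ n, f (t i) = Uu A i) ∧
    ∃ g : ℕ → ℝ → Set T,
      (∀ i < n, ∀ s ∈ Set.Icc (t i) (t (i + 1)), g (i + 1) s ∈ 𝒜) ∧
      (∀ i < n, ∀ s u : ℝ, t i ≤ s → s ≤ u → u ≤ t (i + 1) → g (i + 1) s ⊆ g (i + 1) u) ∧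
      (∀ i < n, g (i + 1) (t i) = A i ∧ g (i + 1) (t (i + 1)) = A (i + 1)) ∧
      (∀ i < n, ∀ s ∈ Set.Icc (t i) (t (i + 1)),
        f s = (⋃ j ∈ Finset.Icc 1 i, A j) ∪ g (i + 1) s)

/-- `ℱ_{∂B} = σ(X_A : A ∈ 𝒜, A ⊆ B, A ⊄ B°)`. -/
def filtBoundary (𝒜 : Set (Set T)) (X : Set T → Ω → ℝ) (B : Set T) : MeasurableSpace Ω :=
  ⨆ A ∈ {A | A ∈ 𝒜 ∧ A ⊆ B ∧ ¬ A ⊆ interior B}, sigOf (X A)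

/-- `ℱ_{B^c} = σ(X_A : A ∈ 𝒜, A ⊄ B)`. -/
def filtComp (𝒜 : Set (Set T)) (X : Set T → Ω → ℝ) (B : Set T) : MeasurableSpace Ω :=
  ⨆ A ∈ {A | A ∈ 𝒜 ∧ ¬ A ⊆ B}, sigOf (X A)

/-- The initial distribution of `X`: the law of `X_{∅'}`. -/
def InitialLaw (P : Measure Ω) (X : Set T → Ω → ℝ) (𝒜 : Set (Set T)) : Measure ℝ :=
  P.map (X (emptyPrime 𝒜))

/-- The measure `Q_{BB'}(x; ·) = F_{B'∖B}(· - x)`, i.e. the law of `X_{B'} - X_B + x`. -/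
def incLaw (P : Measure Ω) (X : Set T → Ω → ℝ) (B B' : Set T) (x : ℝ) : Measure ℝ :=
  P.map fun ω => X B' ω - X B ω + x


set_option linter.unusedSectionVars false

lemma mem_Au_of_mem {𝒜 : Set (Set T)} {A : Set T} (h : A ∈ 𝒜) : A ∈ Au 𝒜 :=
  ⟨{A}, by simp [h], ⟨A, by simp⟩, by simp⟩

lemma biUnion_mem_Au {𝒜 : Set (Set T)} (hemp : ∅ ∈ 𝒜) (S : Finset ℕ) (E : ℕ → Set T)
    (hE : ∀ j ∈ S, E j ∈ 𝒜) : (⋃ j ∈ S, E j) ∈ Au 𝒜 := by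
  classical
  refine ⟨insert ∅ (S.image E), ?_, ⟨∅, Finset.mem_insert_self _ _⟩, ?_⟩
  · intro x hx
    simp only [Finset.coe_insert, Set.mem_insert_iff, Finset.coe_image, Set.mem_image,
      Finset.mem_coe] at hx
    rcases hx with rfl | ⟨j, hj, rfl⟩
    · exact hemp
    · exact hE j hj
  · rw [Finset.coe_insert, Set.sUnion_insert, Finset.coe_image, Set.sUnion_image]
    simp

lemma union_mem_Au {𝒜 : Set (Set T)} {A B : Set T} (hA : A ∈ 𝒜) (hB : B ∈ Au 𝒜) :
    A ∪ B ∈ Au 𝒜 := by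
  classical
  obtain ⟨s, hs, hne, rfl⟩ := hB
  refine ⟨insert A s, ?_, ⟨A, Finset.mem_insert_self _ _⟩, by
    rw [Finset.coe_insert, Set.sUnion_insert]⟩
  intro x hx
  simp only [Finset.coe_insert, Set.mem_insert_iff, Finset.mem_coe] at hx
  rcases hx with rfl | hx
  · exact hA
  · exact hs hx

lemma sum_repr (P : Measure Ω) (𝒜 : Set (Set T)) (hemp : ∅ ∈ 𝒜)
    (X : Set T → Ω → ℝ) (hadd : AddExtension 𝒜 P X)
    (m : ℕ) (E : ℕ → Set T)
    (hEA : ∀ i, i < m → E i ∈ 𝒜)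
    (hEinter : ∀ i, i < m → ∀ j, j < m → ∃ k, k < m ∧ E k = E i ∩ E j)
    (hEord : ∀ i, i < m → ∀ j, j < m → E i ⊂ E j → i < j)
    (hEinj : ∀ i, i < m → ∀ j, j < m → E i = E j → i = j)
    (S : Finset ℕ) (hS : ∀ j ∈ S, j < m)
    (hScl : ∀ t ∈ S, ∀ j, j < m → E j ⊆ E t → j ∈ S) :
    ∀ᵐ ω ∂P, X (⋃ j ∈ S, E j) ω = X ∅ ω + ∑ j ∈ S,
      (X (E j ∪ ⋃ i ∈ Finset.range j, E i) ω - X (⋃ i ∈ Finset.range j, E i) ω) := by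
  classical
  have claim : ∀ t, t ≤ m → ∀ᵐ ω ∂P,
      X (⋃ j ∈ S.filter (· < t), E j) ω = X ∅ ω + ∑ j ∈ S.filter (· < t),
        (X (E j ∪ ⋃ i ∈ Finset.range j, E i) ω - X (⋃ i ∈ Finset.range j, E i) ω) := by
    intro t
    induction t with
    | zero =>
      intro _
      filter_upwards with ω
      simp
    | succ t ih =>
      intro ht
      have htm : t < m := lt_of_lt_of_le (Nat.lt_succ_self t) ht
      have IH := ih (le_of_lt htm)
      by_cases hts : t ∈ S
      · have hfilter : S.filter (· < t + 1) = insert t (S.filter (· < t)) := by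
          ext j
          simp only [Finset.mem_filter, Finset.mem_insert, Nat.lt_succ_iff]
          constructor
          · rintro ⟨hjS, hjt⟩
            rcases lt_or_eq_of_le hjt with h | h
            · exact Or.inr ⟨hjS, h⟩
            · exact Or.inl h
          · rintro (rfl | ⟨hjS, hjt⟩)
            · exact ⟨hts, le_rfl⟩
            · exact ⟨hjS, le_of_lt hjt⟩
        have hGAu : (⋃ j ∈ S.filter (· < t), E j) ∈ Au 𝒜 :=
          biUnion_mem_Au hemp _ _ (fun j hj => hEA j (hS j (Finset.mem_filter.1 hj).1))
        have hEAu : E t ∈ Au 𝒜 := mem_Au_of_mem (hEA t htm)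
        have hFAu : (⋃ i ∈ Finset.range t, E i) ∈ Au 𝒜 :=
          biUnion_mem_Au hemp _ _ (fun j hj =>
            hEA j (lt_trans (Finset.mem_range.1 hj) htm))
        have mod1 := hadd.2 _ hGAu _ hEAu
        have mod2 := hadd.2 _ hEAu _ hFAu
        have idI : (⋃ j ∈ S.filter (· < t), E j) ∩ E t
            = E t ∩ ⋃ i ∈ Finset.range t, E i := by
          ext x
          constructor
          · rintro ⟨hxG, hxt⟩
            refine ⟨hxt, ?_⟩
            simp only [Set.mem_iUnion, Finset.mem_filter] at hxG ⊢
            obtain ⟨j, ⟨hjS, hjt⟩, hxj⟩ := hxG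
            exact ⟨j, Finset.mem_range.2 hjt, hxj⟩
          · rintro ⟨hxt, hxF⟩
            simp only [Set.mem_iUnion] at hxF
            obtain ⟨j, hjr, hxj⟩ := hxF
            have hjt : j < t := Finset.mem_range.1 hjr
            have hjm : j < m := lt_trans hjt htm
            obtain ⟨k, hkm, hkE⟩ := hEinter j hjm t htm
            have hxk : x ∈ E k := by rw [hkE]; exact ⟨hxj, hxt⟩
            have hkS : k ∈ S := hScl t hts k hkm (hkE ▸ Set.inter_subset_right)
            have hkt : k < t := by
              have hsub : E k ⊆ E j := hkE ▸ Set.inter_subset_left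
              rcases eq_or_ne (E k) (E j) with heq | hne
              · exact (hEinj k hkm j hjm heq) ▸ hjt
              · exact lt_trans (hEord k hkm j hjm (ssubset_of_subset_of_ne hsub hne)) hjt
            refine ⟨?_, hxt⟩
            simp only [Set.mem_iUnion]
            exact ⟨k, Finset.mem_filter.2 ⟨hkS, hkt⟩, hxk⟩
        have idG : (⋃ j ∈ S.filter (· < t + 1), E j)
            = (⋃ j ∈ S.filter (· < t), E j) ∪ E t := by
          rw [hfilter, Finset.set_biUnion_insert, Set.union_comm]
        filter_upwards [IH, mod1, mod2] with ω hIH h1 h2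
        rw [idG, hfilter, Finset.sum_insert (by simp)]
        have hI := congrArg (fun s => X s ω) idI
        linarith
      · have hfilter : S.filter (· < t + 1) = S.filter (· < t) := by
          ext j
          simp only [Finset.mem_filter, Nat.lt_succ_iff]
          constructor
          · rintro ⟨hjS, hjt⟩
            rcases lt_or_eq_of_le hjt with h | rfl
            · exact ⟨hjS, h⟩
            · exact absurd hjS hts
          · rintro ⟨hjS, hjt⟩
            exact ⟨hjS, le_of_lt hjt⟩
        rw [hfilter]
        exact IH
  have hfin : S.filter (· < m) = S := Finset.filter_true_of_mem hS
  have := claim m le_rfl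
  rwa [hfin] at this

lemma condIndepGiven_of_indep (P : Measure Ω)
    [IsProbabilityMeasure P] {mF mK mH : MeasurableSpace Ω}
    (hFle : mF ≤ mΩ) (hKle : mK ≤ mΩ) (hHle : mH ≤ mΩ)
    (hIndep : @Indep Ω (mF ⊔ mK) mH mΩ P) : @CondIndepGiven Ω mΩ P mF mH mK := by
  letI : MeasurableSpace Ω := mΩ
  intro g h hg hh
  have hble : mF ⊔ mK ≤ mΩ := sup_le hFle hKle
  haveI : SigmaFinite (P.trim hble) := inferInstance
  haveI : SigmaFinite (P.trim hKle) := inferInstance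
  set χg := g.indicator (fun _ => (1:ℝ)) with hχg
  set χh := h.indicator (fun _ => (1:ℝ)) with hχh
  have hsm_g : StronglyMeasurable[mF] χg := stronglyMeasurable_const.indicator hg
  have hsm_h : StronglyMeasurable[mH] χh := stronglyMeasurable_const.indicator hh
  have hmg : MeasurableSet[mΩ] g := hFle _ hg
  have hmh : MeasurableSet[mΩ] h := hHle _ hh
  have hint_h : Integrable χh P := (integrable_const (1:ℝ)).indicator hmh
  have hint_g : Integrable χg P := (integrable_const (1:ℝ)).indicator hmg
  have hprod : χg * χh = (g ∩ h).indicator (fun _ => (1:ℝ)) := by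
    rw [hχg, hχh]; exact (Set.inter_indicator_one).symm
  have hint_gh : Integrable (χg * χh) P := by
    rw [hprod]; exact (integrable_const (1:ℝ)).indicator (hmg.inter hmh)
  set c : ℝ := ∫ ω, χh ω ∂P with hc
  -- E[χh | big] = c
  have h1 : P[χh | mF ⊔ mK] =ᵐ[P] fun _ => c :=
    condExp_indep_eq hHle hble hsm_h hIndep.symm
  have h1K : P[χh | mK] =ᵐ[P] fun _ => c :=
    condExp_indep_eq hHle hKle hsm_h
      (indep_of_indep_of_le_right hIndep.symm le_sup_right)
  -- pull out
  have h2 : P[χg * χh | mF ⊔ mK] =ᵐ[P] χg * P[χh | mF ⊔ mK] :=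
    condExp_mul_of_stronglyMeasurable_left (hsm_g.mono le_sup_left) hint_gh hint_h
  have h3 : P[χg * χh | mF ⊔ mK] =ᵐ[P] fun ω => χg ω * c := by
    filter_upwards [h2, h1] with ω h2ω h1ω
    rw [h2ω]; simp only [Pi.mul_apply, h1ω]
  -- tower
  have h4 : P[χg * χh | mK] =ᵐ[P] P[P[χg * χh | mF ⊔ mK] | mK] :=
    (condExp_condExp_of_le le_sup_right hble).symm
  have h5 : P[P[χg * χh | mF ⊔ mK] | mK] =ᵐ[P] P[fun ω => χg ω * c | mK] :=
    condExp_congr_ae h3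
  have h6 : P[fun ω => χg ω * c | mK] =ᵐ[P] fun ω => c * (P[χg | mK]) ω := by
    have : (fun ω => χg ω * c) = c • χg := by
      funext ω; simp [smul_eq_mul, mul_comm]
    rw [this]
    exact (condExp_smul c χg mK).trans (Filter.Eventually.of_forall fun ω => rfl)
  have hLHS : P[χg * χh | mK] =ᵐ[P] fun ω => c * (P[χg | mK]) ω :=
    h4.trans (h5.trans h6)
  rw [← hprod]
  filter_upwards [hLHS, h1K] with ω hω h1ω
  rw [hω, h1ω, mul_comm]

/-- The per-finset independence lemma. -/
lemma finset_indep (P : Measure Ω) [IsProbabilityMeasure P]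
    (𝒜 : Set (Set T)) (h𝒜 : IsIndexing 𝒜)
    (X : Set T → Ω → ℝ) (hmeas : MeasOnAu 𝒜 X) (hadd : AddExtension 𝒜 P X)
    (hii : IndepIncrements 𝒜 P X)
    {A : Set T} (hA : A ∈ 𝒜) {B : Set T} (hB : B ∈ Au 𝒜)
    (F : Finset (Set T)) (hF : ∀ D ∈ F, D ∈ 𝒜 ∧ D ⊆ B) :
    Indep ((⨆ D ∈ F, sigOf (X D)) ⊔ sigOf (X B))
      (sigOf fun ω => X (A ∪ B) ω - X B ω) P := by
  classical
  obtain ⟨s, hs𝒜, hsne, hBeq⟩ := id hB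
  -- the finite semilattice L
  set L : Finset (Set T) :=
    ((F ∪ s).powerset.filter fun G => G.Nonempty).image
      fun (G : Finset (Set T)) => ⋂₀ (G : Set (Set T)) with hLdef
  have hLspec : ∀ D ∈ L, ∃ G : Finset (Set T),
      G ⊆ F ∪ s ∧ G.Nonempty ∧ D = ⋂₀ (↑G : Set (Set T)) := by
    intro D hD
    simp only [hLdef, Finset.mem_image, Finset.mem_filter, Finset.mem_powerset] at hD
    obtain ⟨G, ⟨hG1, hG2⟩, hG3⟩ := hD
    exact ⟨G, hG1, hG2, hG3.symm⟩
  have hFs𝒜 : ∀ D ∈ F ∪ s, D ∈ 𝒜 := by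
    intro D hD
    rcases Finset.mem_union.1 hD with h | h
    · exact (hF D h).1
    · exact hs𝒜 h
  have hFsB : ∀ D ∈ F ∪ s, D ⊆ B := by
    intro D hD
    rcases Finset.mem_union.1 hD with h | h
    · exact (hF D h).2
    · rw [hBeq]; exact Set.subset_sUnion_of_mem h
  have hLA : ∀ D ∈ L, D ∈ 𝒜 := by
    intro D hD
    obtain ⟨G, hG1, hG2, rfl⟩ := hLspec D hD
    exact h𝒜.sInter_mem _ (fun x hx => hFs𝒜 x (hG1 hx)) (Finset.coe_nonempty.2 hG2)
  have hLB : ∀ D ∈ L, D ⊆ B := by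
    intro D hD
    obtain ⟨G, hG1, hG2, rfl⟩ := hLspec D hD
    obtain ⟨a, ha⟩ := hG2
    exact (Set.sInter_subset_of_mem (Finset.mem_coe.2 ha)).trans (hFsB a (hG1 ha))
  have hmemL : ∀ D ∈ F ∪ s, D ∈ L := by
    intro D hD
    simp only [hLdef, Finset.mem_image, Finset.mem_filter, Finset.mem_powerset]
    exact ⟨{D}, ⟨Finset.singleton_subset_iff.2 hD, Finset.singleton_nonempty D⟩, by simp⟩
  have hLinter : ∀ D ∈ L, ∀ D' ∈ L, D ∩ D' ∈ L := by
    intro D hD D' hD'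
    obtain ⟨G, hG1, hG2, rfl⟩ := hLspec D hD
    obtain ⟨G', hG1', hG2', rfl⟩ := hLspec D' hD'
    simp only [hLdef, Finset.mem_image, Finset.mem_filter, Finset.mem_powerset]
    refine ⟨G ∪ G', ⟨Finset.union_subset hG1 hG1', hG2.mono Finset.subset_union_left⟩, ?_⟩
    rw [Finset.coe_union, Set.sInter_union]
  have hLne : L.Nonempty := by
    obtain ⟨a, ha⟩ := hsne
    exact ⟨a, hmemL a (Finset.mem_union_right _ ha)⟩
  -- sort L compatibly with inclusion
  set key : Set T → ℕ := fun D => (L.filter fun E' => E' ⊆ D).card with hkeydef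
  set r : Set T → Set T → Prop := fun x y => key x ≤ key y with hrdef
  haveI : DecidableRel r := fun x y => by rw [hrdef]; infer_instance
  haveI : IsTotal (Set T) r := ⟨fun a b => le_total _ _⟩
  haveI : IsTrans (Set T) r := ⟨fun a b c hab hbc => le_trans hab hbc⟩
  set l : List (Set T) := L.toList.insertionSort r with hldef
  have hsorted : l.Pairwise r := List.pairwise_insertionSort r L.toList
  have hperm : l.Perm L.toList := List.perm_insertionSort r L.toList
  have hnodup : l.Nodup := hperm.nodup_iff.2 L.nodup_toList
  have hlmem : ∀ x, x ∈ l ↔ x ∈ L := fun x => hperm.mem_iff.trans Finset.mem_toList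
  set m : ℕ := l.length with hmdef
  set E : ℕ → Set T := fun i => l.getD i ∅ with hEdef
  have hEget : ∀ i, ∀ h : i < m, E i = l[i] := by
    intro i h
    rw [hEdef]
    exact List.getD_eq_getElem l ∅ h
  have hEmem : ∀ i, i < m → E i ∈ L := by
    intro i h
    rw [hEget i h]
    exact (hlmem _).1 (l.getElem_mem h)
  have hEsurj : ∀ D ∈ L, ∃ i, i < m ∧ E i = D := by
    intro D hD
    obtain ⟨i, hi, hDi⟩ := List.mem_iff_getElem.1 ((hlmem D).2 hD)
    exact ⟨i, hi, by rw [hEget i hi, hDi]⟩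
  have hEinj : ∀ i, i < m → ∀ j, j < m → E i = E j → i = j := by
    intro i hi j hj h
    rw [hEget i hi, hEget j hj] at h
    exact (List.Nodup.getElem_inj_iff hnodup).1 h
  have hEord : ∀ i, i < m → ∀ j, j < m → E i ⊂ E j → i < j := by
    intro i hi j hj hss
    by_contra hle
    push_neg at hle
    have hkeylt : key (E i) < key (E j) := by
      rw [hkeydef]
      apply Finset.card_lt_card
      refine (Finset.ssubset_iff_of_subset ?_).2 ⟨E j, ?_, ?_⟩
      · intro x hx
        obtain ⟨hxL, hxsub⟩ := Finset.mem_filter.1 hx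
        exact Finset.mem_filter.2 ⟨hxL, hxsub.trans hss.subset⟩
      · exact Finset.mem_filter.2 ⟨hEmem j hj, subset_rfl⟩
      · intro hc
        exact hss.not_subset (Finset.mem_filter.1 hc).2
    rcases eq_or_lt_of_le hle with heq | hlt
    · subst heq
      exact ssubset_irrefl _ hss
    · have hrel := hsorted.rel_get_of_lt
        (show (⟨j, hj⟩ : Fin l.length) < ⟨i, hi⟩ from hlt)
      rw [hrdef] at hrel
      simp only [List.get_eq_getElem] at hrel
      rw [← hEget j hj, ← hEget i hi] at hrel
      omega
  have hm0 : 0 < m := by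
    obtain ⟨D, hD⟩ := hLne
    obtain ⟨i, hi, _⟩ := hEsurj D hD
    omega
  -- increment structure
  set FF : ℕ → Set T := fun j => ⋃ i ∈ Finset.range j, E i with hFFdef
  have hEA' : ∀ i, i < m → E i ∈ 𝒜 := fun i h => hLA _ (hEmem i h)
  have hFFAu : ∀ j, j ≤ m → FF j ∈ Au 𝒜 := fun j hj =>
    biUnion_mem_Au h𝒜.empty_mem _ _ (fun i hi =>
      hEA' i (lt_of_lt_of_le (Finset.mem_range.1 hi) hj))
  have hBFF : B = FF m := by
    apply subset_antisymm
    · intro x hx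
      rw [hBeq] at hx
      obtain ⟨a, ha, hxa⟩ := hx
      obtain ⟨i, hi, hEi⟩ := hEsurj a (hmemL a (Finset.mem_union_right _ ha))
      rw [hFFdef]
      exact Set.mem_biUnion (Finset.mem_range.2 hi) (hEi ▸ hxa)
    · rw [hFFdef]
      exact Set.iUnion₂_subset fun i hi => hLB _ (hEmem i (Finset.mem_range.1 hi))
  set W : ℕ → Ω → ℝ := fun j ω => X (E j ∪ FF j) ω - X (FF j) ω with hWdef
  set SD : Set T → Finset ℕ := fun D => (Finset.range m).filter fun j => E j ⊆ D
    with hSDdef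
  have hEinter' : ∀ i, i < m → ∀ j, j < m → ∃ k, k < m ∧ E k = E i ∩ E j := by
    intro i hi j hj
    obtain ⟨k, hk, hkeq⟩ := hEsurj (E i ∩ E j) (hLinter _ (hEmem i hi) _ (hEmem j hj))
    exact ⟨k, hk, hkeq⟩
  have hrep : ∀ D ∈ insert B F, X D =ᵐ[P] fun ω => ∑ j ∈ SD D, W j ω := by
    intro D hD
    have hSDsub : ∀ j ∈ SD D, j < m := fun j hj =>
      Finset.mem_range.1 (Finset.mem_filter.1 hj).1
    rcases Finset.mem_insert.1 hD with rfl | hDF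
    · -- D = B
      have hSDB : SD D = Finset.range m := by
        rw [hSDdef]
        exact Finset.filter_true_of_mem fun j hj =>
          hLB _ (hEmem j (Finset.mem_range.1 hj))
      have hsum := sum_repr P 𝒜 h𝒜.empty_mem X hadd m E hEA' hEinter' hEord hEinj
        (SD D) hSDsub (by
          intro t ht j hj hsub
          rw [hSDB] at ht ⊢
          exact Finset.mem_range.2 hj)
      have hUD : (⋃ j ∈ SD D, E j) = D := by
        rw [hSDB]
        rw [hBFF, hFFdef]
      filter_upwards [hsum, hadd.1] with ω h1 h2
      rw [hUD] at h1
      rw [h1, h2, zero_add]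
    · -- D ∈ F
      have hDL : D ∈ L := hmemL D (Finset.mem_union_left _ hDF)
      have hsum := sum_repr P 𝒜 h𝒜.empty_mem X hadd m E hEA' hEinter' hEord hEinj
        (SD D) hSDsub (by
          intro t ht j hj hsub
          obtain ⟨htm, htD⟩ := Finset.mem_filter.1 ht
          exact Finset.mem_filter.2 ⟨Finset.mem_range.2 hj, hsub.trans htD⟩)
      have hUD : (⋃ j ∈ SD D, E j) = D := by
        apply subset_antisymm
        · exact Set.iUnion₂_subset fun j hj => (Finset.mem_filter.1 hj).2
        · obtain ⟨j0, hj0, hEj0⟩ := hEsurj D hDL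
          have hj0' : j0 ∈ SD D :=
            Finset.mem_filter.2 ⟨Finset.mem_range.2 hj0, hEj0.le⟩
          intro x hx
          exact Set.mem_biUnion hj0' (hEj0.symm ▸ hx)
      filter_upwards [hsum, hadd.1] with ω h1 h2
      rw [hUD] at h1
      rw [h1, h2, zero_add]
  -- apply independent increments
  set AA : ℕ → Set T := fun i => if i = 0 then A else E (i - 1) with hAAdef
  set BB : ℕ → Set T := fun i => if i = 0 then B else FF (i - 1) with hBBdef
  have hc1 : ∀ i < m + 1, AA i ∈ 𝒜 := by
    intro i hi
    by_cases h : i = 0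
    · simp only [hAAdef, h, if_pos rfl]; exact hA
    · simp only [hAAdef, if_neg h]; exact hEA' (i - 1) (by omega)
  have hc2 : ∀ i < m + 1, BB i ∈ Au 𝒜 := by
    intro i hi
    by_cases h : i = 0
    · simp only [hBBdef, h, if_pos rfl]; exact hB
    · simp only [hBBdef, if_neg h]; exact hFFAu (i - 1) (by omega)
  have hdisj0 : ∀ k, k < m → Disjoint (A \ B) (E k \ FF k) := by
    intro k hk
    rw [Set.disjoint_left]
    rintro x ⟨hxA, hxB⟩ ⟨hxE, hxF⟩
    exact hxB (hLB _ (hEmem k hk) hxE)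
  have hdisj2 : ∀ k k', k < k' → Disjoint (E k \ FF k) (E k' \ FF k') := by
    intro k k' hkk'
    rw [Set.disjoint_left]
    rintro x ⟨hxE, hxF⟩ ⟨hxE', hxF'⟩
    exact hxF' (Set.mem_biUnion (Finset.mem_range.2 hkk') hxE)
  have hc3 : ∀ i < m + 1, ∀ j < m + 1, i ≠ j →
      Disjoint (AA i \ BB i) (AA j \ BB j) := by
    intro i hi j hj hne
    by_cases hi0 : i = 0
    · subst hi0
      have hj0 : j ≠ 0 := fun h => hne h.symm
      simp only [hAAdef, hBBdef, if_pos rfl, if_neg hj0]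
      exact hdisj0 (j - 1) (by omega)
    · by_cases hj0 : j = 0
      · subst hj0
        simp only [hAAdef, hBBdef, if_pos rfl, if_neg hi0]
        exact (hdisj0 (i - 1) (by omega)).symm
      · simp only [hAAdef, hBBdef, if_neg hi0, if_neg hj0]
        have : i - 1 ≠ j - 1 := by omega
        rcases lt_or_gt_of_ne this with h | h
        · exact hdisj2 _ _ h
        · exact (hdisj2 _ _ h).symm
  have hInd := hii (m + 1) AA BB hc1 hc2 hc3
  have hfmeas : ∀ i : Fin (m + 1),
      Measurable (fun ω => X (AA ↑i ∪ BB ↑i) ω - X (BB ↑i) ω) := by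
    intro i
    exact (hmeas _ (union_mem_Au (hc1 _ i.isLt) (hc2 _ i.isLt))).sub
      (hmeas _ (hc2 _ i.isLt))
  set Sf : Finset (Fin (m + 1)) := {0} with hSfdef
  set Tf : Finset (Fin (m + 1)) := {0}ᶜ with hTfdef
  have hsplit := hInd.indepFun_finset Sf Tf disjoint_compl_right hfmeas
  have hmem_Tf : ∀ (j : ℕ) (h : j < m), (⟨j + 1, by omega⟩ : Fin (m + 1)) ∈ Tf := by
    intro j h
    rw [hTfdef, Finset.mem_compl, Finset.mem_singleton]
    exact Fin.ne_of_val_ne (by simp)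
  set embed : ℕ → {x // x ∈ Tf} := fun j =>
    if h : j < m then ⟨⟨j + 1, by omega⟩, hmem_Tf j h⟩
    else ⟨⟨m, by omega⟩, by
      rw [hTfdef, Finset.mem_compl, Finset.mem_singleton]
      exact Fin.ne_of_val_ne (by simpa using (Nat.pos_iff_ne_zero.1 hm0))⟩
    with hembdef
  set φ : ({x // x ∈ Tf} → ℝ) → ({x // x ∈ insert B F} → ℝ) :=
    fun v D => ∑ j ∈ Finset.range m, if j ∈ SD ↑D then v (embed j) else 0 with hφdef
  have hφmeas : Measurable φ := by
    rw [hφdef]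
    apply measurable_pi_lambda
    intro D
    apply Finset.measurable_sum
    intro j _
    by_cases hj : j ∈ SD ↑D
    · simp only [if_pos hj]; exact measurable_pi_apply _
    · simp only [if_neg hj]; exact measurable_const
  have h0Sf : (0 : Fin (m + 1)) ∈ Sf := by rw [hSfdef]; exact Finset.mem_singleton_self 0
  set ψ : ({x // x ∈ Sf} → ℝ) → ℝ := fun v => v ⟨0, h0Sf⟩ with hψdef
  have hψmeas : Measurable ψ := measurable_pi_apply _
  have hcomp := (hsplit.symm).comp hφmeas hψmeas
  have hψeq : (ψ ∘ fun a (i : {x // x ∈ Sf}) => X (AA ↑↑i ∪ BB ↑↑i) a - X (BB ↑↑i) a)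
      = fun ω => X (A ∪ B) ω - X B ω := by
    funext ω
    simp only [Function.comp_apply, hψdef, hAAdef, hBBdef, Fin.val_zero, reduceIte]
  have hVt : (φ ∘ fun a (i : {x // x ∈ Tf}) => X (AA ↑↑i ∪ BB ↑↑i) a - X (BB ↑↑i) a)
      =ᵐ[P] (fun ω (D : {x // x ∈ insert B F}) => X (↑D) ω) := by
    have hae : ∀ᵐ ω ∂P, ∀ D : {x // x ∈ insert B F}, X (↑D) ω = ∑ j ∈ SD ↑D, W j ω :=
      ae_all_iff.2 fun D => hrep ↑D D.2
    filter_upwards [hae] with ω hω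
    funext D
    simp only [Function.comp_apply, hφdef]
    rw [hω D]
    rw [Finset.sum_ite_mem]
    have hint : Finset.range m ∩ SD ↑D = SD ↑D :=
      Finset.inter_eq_right.2 (Finset.filter_subset _ _)
    rw [hint]
    apply Finset.sum_congr rfl
    intro j hj
    have hjm : j < m := Finset.mem_range.1 (Finset.mem_filter.1 hj).1
    rw [hembdef]
    simp only [dif_pos hjm]
    have hval : ((⟨⟨j + 1, by omega⟩, hmem_Tf j hjm⟩ : {x // x ∈ Tf}) : Fin (m + 1)).val
        = j + 1 := rfl
    simp only [hval, hAAdef, hBBdef, Nat.succ_ne_zero, if_neg (Nat.succ_ne_zero j),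
      Nat.add_sub_cancel, hWdef]
  have hIndepVY : IndepFun (fun ω (D : {x // x ∈ insert B F}) => X (↑D) ω)
      (fun ω => X (A ∪ B) ω - X B ω) P :=
    IndepFun.congr hcomp hVt (hψeq ▸ Filter.EventuallyEq.rfl)
  rw [IndepFun_iff_Indep] at hIndepVY
  refine indep_of_indep_of_le_left hIndepVY ?_
  have hle : ∀ D : Set T, ∀ hD : D ∈ insert B F, sigOf (X D) ≤
      MeasurableSpace.comap (fun ω (D' : {x // x ∈ insert B F}) => X (↑D') ω)
        MeasurableSpace.pi := by
    intro D hD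
    have heq : sigOf (X D) = MeasurableSpace.comap
        (fun ω (D' : {x // x ∈ insert B F}) => X (↑D') ω)
        (MeasurableSpace.comap (fun v : {x // x ∈ insert B F} → ℝ => v ⟨D, hD⟩)
          inferInstance) := by
      rw [sigOf, MeasurableSpace.comap_comp]
      rfl
    rw [heq]
    exact MeasurableSpace.comap_mono (measurable_pi_apply _).comap_le
  exact sup_le (iSup₂_le fun D hD => hle D (Finset.mem_insert_of_mem hD))
    (hle B (Finset.mem_insert_self _ _))


/-- every set-indexed process with independent increments is set-Markov. -/
theorem statement9 {T : Type*} [TopologicalSpace T] [CompactSpace T] [T2Space T]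
    {Ω : Type*} [mΩ : MeasurableSpace Ω] (P : Measure Ω) [IsProbabilityMeasure P]
    (𝒜 : Set (Set T)) (h𝒜 : IsIndexing 𝒜)
    (X : Set T → Ω → ℝ) (hmeas : MeasOnAu 𝒜 X) (hadd : AddExtension 𝒜 P X)
    (hii : IndepIncrements 𝒜 P X) :
    SetMarkov 𝒜 P X := by
  classical
  intro A hA B hB
  have hXB : Measurable (X B) := hmeas B hB
  have hfilt_le : filt 𝒜 X B ≤ mΩ :=
    iSup₂_le fun A' hA' => (hmeas A' (mem_Au_of_mem hA'.1)).comap_le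
  have hK_le : sigOf (X B) ≤ mΩ := hXB.comap_le
  have hY : Measurable (fun ω => X (A ∪ B) ω - X B ω) :=
    (hmeas _ (union_mem_Au hA hB)).sub hXB
  have hH_le : sigOf (fun ω => X (A ∪ B) ω - X B ω) ≤ mΩ := hY.comap_le
  apply condIndepGiven_of_indep P hfilt_le hK_le hH_le
  set mfam : {F : Finset (Set T) // ∀ D ∈ F, D ∈ 𝒜 ∧ D ⊆ B} → MeasurableSpace Ω :=
    fun F => (⨆ D ∈ F.1, sigOf (X D)) ⊔ sigOf (X B) with hmfamdef
  have hmono : ∀ F F' : {F : Finset (Set T) // ∀ D ∈ F, D ∈ 𝒜 ∧ D ⊆ B},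
      F.1 ⊆ F'.1 → mfam F ≤ mfam F' := by
    intro F F' hsub
    exact sup_le_sup_right
      (iSup₂_le fun D hD => le_iSup₂ (f := fun D _ => sigOf (X D)) D (hsub hD)) _
  have hdir : Directed (· ≤ ·) mfam := by
    intro F F'
    refine ⟨⟨F.1 ∪ F'.1, ?_⟩, hmono _ _ Finset.subset_union_left,
      hmono _ _ Finset.subset_union_right⟩
    intro D hD
    rcases Finset.mem_union.1 hD with h | h
    · exact F.2 D h
    · exact F'.2 D h
  have hsup : (⨆ F, mfam F) = filt 𝒜 X B ⊔ sigOf (X B) := by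
    apply le_antisymm
    · refine iSup_le fun F => sup_le ?_ le_sup_right
      refine iSup₂_le fun D hD => le_sup_of_le_left ?_
      exact le_iSup₂ (f := fun A' (_ : A' ∈ {A' | A' ∈ 𝒜 ∧ A' ⊆ B}) => sigOf (X A'))
        D (F.2 D hD)
    · refine sup_le ?_ ?_
      · refine iSup₂_le fun A' hA' => ?_
        have h1 : sigOf (X A') ≤ mfam ⟨{A'}, by
          intro D hD
          rw [Finset.mem_singleton] at hD
          subst hD
          exact hA'⟩ :=
          le_sup_of_le_left (le_iSup₂ (f := fun D (_ : D ∈ ({A'} : Finset (Set T))) =>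
            sigOf (X D)) A' (Finset.mem_singleton_self A'))
        exact h1.trans (le_iSup mfam _)
      · exact le_sup_right.trans (le_iSup mfam ⟨∅, by simp⟩)
  rw [← hsup]
  exact indep_iSup_of_directed_le
    (fun F => finset_indep P 𝒜 h𝒜 X hmeas hadd hii hA hB F.1 F.2)
    (fun F => sup_le (iSup₂_le fun D hD =>
      (hmeas D (mem_Au_of_mem (F.2 D hD).1)).comap_le) hK_le)
    hH_le hdir

end SetIndexedMarkov
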